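/- Let a > 0 and ρ ∈ (−1,1) with (a,ρ) ≠ (1,0), let V_0 be the 2×2 matrix with rows (a, ρ) and (ρ, 1/a), and let s_{11}, s_{12} be the (1,1) and (1,2) entries of S = V_0^{1/2} / trace(V_0^{1/2}) (positive definite square root). Define d = 1/2 + √((s_{11} − 1/2)² + s_{12}²), b = d − s_{11}, c = (2d − 1)/(d(1 − d)). Then ρ = c s_{12} b / √( (s_{12}² + b²)² + (s_{12} c b)² ). In other words, the spatial sign correlation functional applied to the spatial sign covariance matrix of a bivariate elliptical distribution with shape V_0 recovers the generalized correlation coefficient ρ exactly. -/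

import Mathlib

open Matrix Real

/-- The spatial sign correlation read off from the entries s₁₁, s₁₂ of a (2×2, symmetric)
matrix: ρ̂ = c s₁₂ b / √((s₁₂² + b²)² + (s₁₂ c b)²), where
d = 1/2 + √((s₁₁ − 1/2)² + s₁₂²), b = d − s₁₁, c = (2d − 1)/(d(1 − d)). -/
noncomputable def rhoFromS (s₁₁ s₁₂ : ℝ) : ℝ :=
  let d := 1 / 2 + Real.sqrt ((s₁₁ - 1 / 2) ^ 2 + s₁₂ ^ 2)
  let b := d - s₁₁
  let c := (2 * d - 1) / (d * (1 - d))
  c * s₁₂ * b / Real.sqrt ((s₁₂ ^ 2 + b ^ 2) ^ 2 + (s₁₂ * c * b) ^ 2)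

/-- The scalar core of the Fisher-consistency computation. -/
lemma rho_key (a ρ δ τ p q : ℝ) (ha : 0 < a) (hρ0 : ρ ≠ 0) (hδpos : 0 < δ)
    (hδsq : δ ^ 2 = 1 - ρ ^ 2) (hτpos : 0 < τ) (hτ2 : τ ^ 2 = a + a⁻¹ + 2 * δ)
    (hqτ : q * τ = ρ) (hpτ : p * τ = a + δ) :
    ρ = rhoFromS (τ⁻¹ * p) (τ⁻¹ * q) := by
  have ha' : a ≠ 0 := ne_of_gt ha
  have hτne : τ ≠ 0 := ne_of_gt hτpos
  have hδne : δ ≠ 0 := ne_of_gt hδpos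
  have hinv : a * a⁻¹ = 1 := mul_inv_cancel₀ ha'
  obtain ⟨m, hm⟩ : ∃ m : ℝ, m = (a - a⁻¹) / 2 := ⟨_, rfl⟩
  obtain ⟨w, hw⟩ : ∃ w : ℝ, w = Real.sqrt (m ^ 2 + ρ ^ 2) := ⟨_, rfl⟩
  have hρ2pos : 0 < ρ ^ 2 := by positivity
  have hwpos : 0 < w := hw ▸ Real.sqrt_pos.mpr (by positivity)
  have hw2 : w ^ 2 = m ^ 2 + ρ ^ 2 := by rw [hw]; exact Real.sq_sqrt (by positivity)
  have hwm : m < w := by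
    have h2 : Real.sqrt (m ^ 2) < w := hw ▸ Real.sqrt_lt_sqrt (sq_nonneg m) (by linarith)
    calc m ≤ |m| := le_abs_self m
      _ = Real.sqrt (m ^ 2) := (Real.sqrt_sq_eq_abs m).symm
      _ < w := h2
  have hwmne : w - m ≠ 0 := sub_ne_zero.mpr (ne_of_gt hwm)
  have hs1 : τ⁻¹ * p - 1 / 2 = m / τ ^ 2 := by
    rw [hm]
    field_simp
    linear_combination 2 * a * hpτ - a * hτ2 - hinv
  have hq : τ⁻¹ * q = ρ / τ ^ 2 := by
    field_simp
    linear_combination hqτ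
  have e1 : (τ⁻¹ * p - 1 / 2) ^ 2 + (τ⁻¹ * q) ^ 2 = (w / τ ^ 2) ^ 2 := by
    rw [hs1, hq]
    field_simp
    linear_combination (-1 : ℝ) * hw2
  have e1' : Real.sqrt ((τ⁻¹ * p - 1 / 2) ^ 2 + (τ⁻¹ * q) ^ 2) = w / τ ^ 2 := by
    rw [e1, Real.sqrt_sq (by positivity)]
  simp only [rhoFromS]
  rw [e1']
  have hb : 1 / 2 + w / τ ^ 2 - τ⁻¹ * p = (w - m) / τ ^ 2 := by
    have := hs1
    field_simp at this ⊢
    linear_combination (-1 : ℝ) * this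
  have hd1 : (1 / 2 + w / τ ^ 2) * (1 - (1 / 2 + w / τ ^ 2)) = δ / τ ^ 2 := by
    field_simp
    linear_combination (τ ^ 2 + a + a⁻¹ - 2 * δ) * hτ2
      - 4 * hw2 - 4 * (m + (a - a⁻¹) / 2) * hm + 4 * hinv
      - 4 * hδsq
  have hc : 2 * (1 / 2 + w / τ ^ 2) - 1 = 2 * w / τ ^ 2 := by ring
  rw [hb, hd1, hc, hq]
  have hcval : 2 * w / τ ^ 2 / (δ / τ ^ 2) = 2 * w / δ := by
    field_simp
  rw [hcval]
  have hkey : ρ ^ 2 + (w - m) ^ 2 = 2 * w * (w - m) := by linear_combination (-1 : ℝ) * hw2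
  have hE : ((ρ / τ ^ 2) ^ 2 + ((w - m) / τ ^ 2) ^ 2) ^ 2 +
      (ρ / τ ^ 2 * (2 * w / δ) * ((w - m) / τ ^ 2)) ^ 2
      = (2 * w * (w - m) / (δ * τ ^ 4)) ^ 2 := by
    have hA : (ρ / τ ^ 2) ^ 2 + ((w - m) / τ ^ 2) ^ 2 = 2 * w * (w - m) / τ ^ 4 := by
      field_simp
      linear_combination (-1 : ℝ) * hw2
    rw [hA]
    field_simp
    linear_combination hδsq
  have hEpos : 0 ≤ 2 * w * (w - m) / (δ * τ ^ 4) := by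
    have h1 : 0 < w - m := sub_pos.mpr hwm
    have h2 : 0 < 2 * w * (w - m) := by positivity
    positivity
  rw [hE, Real.sqrt_sq hEpos]
  field_simp

/-- Fisher consistency of the spatial sign correlation functional.
Let a > 0, ρ ∈ (−1,1), (a,ρ) ≠ (1,0), V₀ = [[a,ρ],[ρ,1/a]], R its positive definite
square root, and S = R / trace R (the SSCM of a bivariate elliptical distribution with
shape V₀).  Then applying the spatial sign correlation functional to the entries of S
recovers ρ exactly. -/
theorem spatial_sign_correlation_fisher_consistency
    (a ρ : ℝ) (ha : 0 < a) (hρ₁ : -1 < ρ) (hρ₂ : ρ < 1) (hne : (a, ρ) ≠ (1, 0))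
    (R : Matrix (Fin 2) (Fin 2) ℝ) (hR : R.PosDef)
    (hRsq : R * R = !![a, ρ; ρ, a⁻¹]) :
    ρ = rhoFromS (((R.trace)⁻¹ • R) 0 0) (((R.trace)⁻¹ • R) 0 1) := by
  have ha' : a ≠ 0 := ne_of_gt ha
  set p := R 0 0 with hp'
  set q := R 0 1 with hq'
  set s := R 1 1 with hs'
  have hsym : R 1 0 = q := by
    have := hR.1
    rw [Matrix.IsHermitian] at this
    have h := congrFun (congrFun this 1) 0
    simpa [Matrix.conjTranspose_apply] using h.symm
  have h00 : p * p + q * q = a := by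
    have := congrFun (congrFun hRsq 0) 0
    simpa [Matrix.mul_apply, Fin.sum_univ_two, hsym] using this
  have h01 : p * q + q * s = ρ := by
    have := congrFun (congrFun hRsq 0) 1
    simpa [Matrix.mul_apply, Fin.sum_univ_two, hsym] using this
  have h11 : q * q + s * s = a⁻¹ := by
    have := congrFun (congrFun hRsq 1) 1
    simpa [Matrix.mul_apply, Fin.sum_univ_two, hsym] using this
  have hppos : 0 < p := by
    exact hR.diag_pos
  have hspos : 0 < s := by
    exact hR.diag_pos
  have hdetpos : 0 < p * s - q * q := by
    have := hR.det_pos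
    rwa [Matrix.det_fin_two, hsym] at this
  set δ := Real.sqrt (1 - ρ ^ 2) with hδ'
  have hρsq : ρ ^ 2 < 1 := by nlinarith
  have hδpos : 0 < δ := Real.sqrt_pos.mpr (by nlinarith)
  have hδsq : δ ^ 2 = 1 - ρ ^ 2 := Real.sq_sqrt (by nlinarith)
  have hdet : p * s - q * q = δ := by
    have h1 : (p * s - q * q) ^ 2 = δ ^ 2 := by
      have h2 : (p * s - q * q) ^ 2 = a * a⁻¹ - ρ ^ 2 := by nlinarith [h00, h01, h11]
      rw [h2, mul_inv_cancel₀ ha', hδsq]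
    nlinarith [hdetpos, hδpos]
  have htr : R.trace = p + s := by rw [Matrix.trace_fin_two]
  set τ := p + s with hτ'
  have hτpos : 0 < τ := by positivity
  have hτ2 : τ ^ 2 = a + a⁻¹ + 2 * δ := by
    rw [hτ']; linear_combination h00 + h11 + 2 * hdet
  have hτne : τ ≠ 0 := ne_of_gt hτpos
  have hqτ : q * τ = ρ := by rw [hτ']; linear_combination h01
  have hpτ : p * τ = a + δ := by rw [hτ']; linear_combination h00 + hdet
  have hS00 : ((R.trace)⁻¹ • R) 0 0 = τ⁻¹ * p := by rw [htr, Matrix.smul_apply, smul_eq_mul]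
  have hS01 : ((R.trace)⁻¹ • R) 0 1 = τ⁻¹ * q := by rw [htr, Matrix.smul_apply, smul_eq_mul]
  rw [hS00, hS01]
  rcases eq_or_ne ρ 0 with hρ0 | hρ0
  · have hq0 : q = 0 := by
      have h := hqτ
      rw [hρ0] at h
      exact (mul_eq_zero.mp h).resolve_right hτne
    rw [hq0, hρ0]
    simp [rhoFromS]
  · exact rho_key a ρ δ τ p q ha hρ0 hδpos hδsq hτpos hτ2 hqτ hpτ
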